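/- arXiv:math/0607817 — 2 statements merged into one kernel-verified Lean document; each statement's English description precedes it below -/
import Mathlib

section
/- Let (𝔞, δ) be a Lie bialgebra and let f ∈ Λ²𝔞 be a classical twist, i.e., Alt((δ ⊗ id)(f)) + [f^{13}, f^{23}] + [f^{12}, f^{13}] + [f^{12}, f^{23}] = 0 (equivalently, CYB-type condition: the cyclic sum of (δ⊗id)(f) + [f^{13}, f^{23}] vanishes). Then δ_f := δ + ad(f), where ad(f)(x) := [f, x ⊗ 1 + 1 ⊗ x], defines a Lie bialgebra structure on 𝔞 with the same Lie bracket, i.e., δ_f is a 1-cocycle satisfying the co-Jacobi identity. -/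
open TensorProduct

variable (k : Type) [Field k] (a : Type) [LieRing a] [LieAlgebra k a]

/-- The Lie bracket of `a` as a bilinear map. -/
noncomputable def br2 : a →ₗ[k] a →ₗ[k] a :=
  LinearMap.mk₂ k (fun x y => ⁅x, y⁆) add_lie smul_lie lie_add lie_smul

/-- The Lie bracket as a linear map on the tensor square. -/
noncomputable def brL : a ⊗[k] a →ₗ[k] a := TensorProduct.lift (br2 k a)

/-- The adjoint action of `a` on `a ⊗ a`: `act x (u ⊗ v) = ⁅x,u⁆ ⊗ v + u ⊗ ⁅x,v⁆`,
which equals `[x ⊗ 1 + 1 ⊗ x, u ⊗ v]` in `U(a) ⊗ U(a)`. -/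
noncomputable def act : a →ₗ[k] (a ⊗[k] a →ₗ[k] a ⊗[k] a) where
  toFun x := TensorProduct.map (br2 k a x) LinearMap.id + TensorProduct.map LinearMap.id (br2 k a x)
  map_add' x y := by
    ext u v
    simp [br2, add_lie, TensorProduct.tmul_add, TensorProduct.add_tmul]
    abel
  map_smul' c x := by
    ext u v
    simp [br2, smul_lie, TensorProduct.tmul_add, TensorProduct.smul_tmul', TensorProduct.tmul_smul,
      smul_add]

/-- `adL f` is the map `x ↦ [f, x ⊗ 1 + 1 ⊗ x]`. -/
noncomputable def adL (f : a ⊗[k] a) : a →ₗ[k] a ⊗[k] a := -((act k a).flip f)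

/-- Cyclic permutation `x ⊗ y ⊗ z ↦ y ⊗ z ⊗ x` on the triple tensor product. -/
noncomputable def cyc : a ⊗[k] (a ⊗[k] a) →ₗ[k] a ⊗[k] (a ⊗[k] a) :=
  (TensorProduct.congr (LinearEquiv.refl k a) (TensorProduct.comm k a a)).toLinearMap ∘ₗ
    (TensorProduct.leftComm k a a a).toLinearMap

/-- Sum over cyclic permutations. -/
noncomputable def cycSum (w : a ⊗[k] (a ⊗[k] a)) : a ⊗[k] (a ⊗[k] a) :=
  w + cyc k a w + cyc k a (cyc k a w)

/-- `(d ⊗ id)` on the tensor square, landing in the triple tensor product. -/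
noncomputable def d13 (d : a →ₗ[k] a ⊗[k] a) : a ⊗[k] a →ₗ[k] a ⊗[k] (a ⊗[k] a) :=
  (TensorProduct.assoc k a a a).toLinearMap ∘ₗ TensorProduct.map d LinearMap.id

/-- `(f, g) ↦ [f^{13}, g^{23}]`: on pure tensors `(x ⊗ y, u ⊗ v) ↦ x ⊗ u ⊗ ⁅y,v⁆`. -/
noncomputable def C13_23 : (a ⊗[k] a) ⊗[k] (a ⊗[k] a) →ₗ[k] a ⊗[k] (a ⊗[k] a) :=
  (TensorProduct.map LinearMap.id (TensorProduct.map LinearMap.id (brL k a))) ∘ₗ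
    (TensorProduct.congr (LinearEquiv.refl k a) (TensorProduct.leftComm k a a a)).toLinearMap ∘ₗ
    (TensorProduct.assoc k a a (a ⊗[k] a)).toLinearMap

/-- `(f, g) ↦ [f^{12}, g^{13}]`: on pure tensors `(x ⊗ y, u ⊗ v) ↦ ⁅x,u⁆ ⊗ y ⊗ v`. -/
noncomputable def C12_13 : (a ⊗[k] a) ⊗[k] (a ⊗[k] a) →ₗ[k] a ⊗[k] (a ⊗[k] a) :=
  (TensorProduct.map (brL k a) LinearMap.id) ∘ₗ
    (TensorProduct.tensorTensorTensorComm k a a a a).toLinearMap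

/-- `(f, g) ↦ [f^{12}, g^{23}]`: on pure tensors `(x ⊗ y, u ⊗ v) ↦ x ⊗ ⁅y,u⁆ ⊗ v`. -/
noncomputable def C12_23 : (a ⊗[k] a) ⊗[k] (a ⊗[k] a) →ₗ[k] a ⊗[k] (a ⊗[k] a) :=
  (TensorProduct.map LinearMap.id (TensorProduct.map (brL k a) LinearMap.id)) ∘ₗ
    (TensorProduct.congr (LinearEquiv.refl k a) (TensorProduct.assoc k a a a).symm).toLinearMap ∘ₗ
    (TensorProduct.assoc k a a (a ⊗[k] a)).toLinearMap

/-- Membership in `Λ²a`: antisymmetry in `a ⊗ a`. -/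
def IsAntisym (w : a ⊗[k] a) : Prop := TensorProduct.comm k a a w = -w

/-- The 1-cocycle condition for a cobracket. -/
def IsCocycle (d : a →ₗ[k] a ⊗[k] a) : Prop :=
  ∀ x y : a, d ⁅x, y⁆ = act k a x (d y) - act k a y (d x)

/-- The co-Jacobi identity. -/
def IsCoJacobi (d : a →ₗ[k] a ⊗[k] a) : Prop :=
  ∀ x : a, cycSum k a ((d13 k a d) (d x)) = 0

/-- `(a, d)` is a Lie bialgebra. -/
def IsLieCobracket (d : a →ₗ[k] a ⊗[k] a) : Prop :=
  (∀ x, IsAntisym k a (d x)) ∧ IsCocycle k a d ∧ IsCoJacobi k a d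

/-- The classical twist equation `(d ⊗ id)(f) + [f^{13}, f^{23}] + cyclic permutations = 0`. -/
def IsTwist (d : a →ₗ[k] a ⊗[k] a) (f : a ⊗[k] a) : Prop :=
  cycSum k a ((d13 k a d) f + C13_23 k a (f ⊗ₜ f)) = 0

/-- The twisted cobracket `δ + ad(f)`. -/
noncomputable def twistCobr (d : a →ₗ[k] a ⊗[k] a) (f : a ⊗[k] a) : a →ₗ[k] a ⊗[k] a :=
  d + adL k a f


section Aux

lemma lskew {L : Type} [LieRing L] (x y : L) : ⁅x, y⁆ = -⁅y, x⁆ := by rw [← lie_skew x y]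

lemma lleft {L : Type} [LieRing L] (x p q : L) : ⁅⁅x, p⁆, q⁆ = -⁅q, ⁅x, p⁆⁆ := lskew _ _

lemma lem_xin {L : Type} [LieRing L] (x p q : L) : ⁅x, ⁅p, q⁆⁆ = ⁅p, ⁅x, q⁆⁆ - ⁅q, ⁅x, p⁆⁆ := by
  rw [leibniz_lie x p q, lleft]
  abel

lemma act_tmul (x u v : a) : act k a x (u ⊗ₜ[k] v) = ⁅x,u⁆ ⊗ₜ[k] v + u ⊗ₜ[k] ⁅x,v⁆ := by
  simp [act, br2]

lemma cyc_tmul (x y z : a) : cyc k a (x ⊗ₜ[k] (y ⊗ₜ[k] z)) = y ⊗ₜ[k] (z ⊗ₜ[k] x) := by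
  simp [cyc]

noncomputable def act3 (x : a) : a ⊗[k] (a ⊗[k] a) →ₗ[k] a ⊗[k] (a ⊗[k] a) :=
  TensorProduct.map (br2 k a x) LinearMap.id + TensorProduct.map LinearMap.id (act k a x)

lemma act3_tmul (x u v w : a) :
    act3 k a x (u ⊗ₜ[k] (v ⊗ₜ[k] w)) =
      ⁅x,u⁆ ⊗ₜ[k] (v ⊗ₜ[k] w) + u ⊗ₜ[k] (⁅x,v⁆ ⊗ₜ[k] w) + u ⊗ₜ[k] (v ⊗ₜ[k] ⁅x,w⁆) := by
  simp [act3, br2, act_tmul, tmul_add]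
  abel

lemma comm_act (x : a) (w : a ⊗[k] a) :
    TensorProduct.comm k a a (act k a x w) = act k a x (TensorProduct.comm k a a w) := by
  have : (TensorProduct.comm k a a).toLinearMap ∘ₗ act k a x
      = act k a x ∘ₗ (TensorProduct.comm k a a).toLinearMap := by
    ext u v
    simp [act_tmul]
    abel
  exact LinearMap.congr_fun this w

lemma act_lie (x y : a) (w : a ⊗[k] a) :
    act k a ⁅x, y⁆ w = act k a x (act k a y w) - act k a y (act k a x w) := by
  have : act k a ⁅x, y⁆ = act k a x ∘ₗ act k a y - act k a y ∘ₗ act k a x := by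
    ext u v
    simp [act_tmul, lie_lie, tmul_sub, sub_tmul, tmul_add, add_tmul]
    abel
  rw [this]; rfl

lemma cyc3 (w : a ⊗[k] (a ⊗[k] a)) : cyc k a (cyc k a (cyc k a w)) = w := by
  have : cyc k a ∘ₗ cyc k a ∘ₗ cyc k a = LinearMap.id := by
    ext x y z
    simp [cyc_tmul]
  exact LinearMap.congr_fun this w

lemma cyc_act3 (x : a) (w : a ⊗[k] (a ⊗[k] a)) :
    cyc k a (act3 k a x w) = act3 k a x (cyc k a w) := by
  have : cyc k a ∘ₗ act3 k a x = act3 k a x ∘ₗ cyc k a := by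
    ext u v w
    simp [cyc_tmul, act3_tmul]
    abel
  exact LinearMap.congr_fun this w

noncomputable def cycL : a ⊗[k] (a ⊗[k] a) →ₗ[k] a ⊗[k] (a ⊗[k] a) :=
  LinearMap.id + cyc k a + cyc k a ∘ₗ cyc k a

lemma cycSum_eq (w : a ⊗[k] (a ⊗[k] a)) : cycSum k a w = cycL k a w := by
  simp [cycSum, cycL]

lemma cycL_tmul (x y z : a) :
    cycL k a (x ⊗ₜ[k] (y ⊗ₜ[k] z)) =
      x ⊗ₜ[k] (y ⊗ₜ[k] z) + y ⊗ₜ[k] (z ⊗ₜ[k] x) + z ⊗ₜ[k] (x ⊗ₜ[k] y) := by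
  simp [cycL, cyc_tmul]

lemma cycL_act3 (x : a) (w : a ⊗[k] (a ⊗[k] a)) :
    cycL k a (act3 k a x w) = act3 k a x (cycL k a w) := by
  simp [cycL, cyc_act3]

lemma d13_tmul (d : a →ₗ[k] a ⊗[k] a) (u v : a) :
    d13 k a d (u ⊗ₜ[k] v) = TensorProduct.assoc k a a a (d u ⊗ₜ[k] v) := by
  simp [d13]

lemma d13_add (d d' : a →ₗ[k] a ⊗[k] a) : d13 k a (d + d') = d13 k a d + d13 k a d' := by
  ext u v
  simp [d13_tmul, add_tmul]

lemma d13_neg (d : a →ₗ[k] a ⊗[k] a) : d13 k a (-d) = -(d13 k a d) := by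
  ext u v
  simp [d13_tmul, neg_tmul]

lemma d13_smul (c : k) (d : a →ₗ[k] a ⊗[k] a) : d13 k a (c • d) = c • d13 k a d := by
  ext u v
  simp [d13_tmul]
  rw [← smul_tmul', map_smul]

noncomputable def Smap (f : a ⊗[k] a) : a ⊗[k] a →ₗ[k] a ⊗[k] (a ⊗[k] a) :=
  d13 k a ((act k a).flip f)

lemma Smap_tmul (f : a ⊗[k] a) (u v : a) :
    Smap k a f (u ⊗ₜ[k] v) = TensorProduct.assoc k a a a (act k a u f ⊗ₜ[k] v) := by
  simp [Smap, d13_tmul]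

lemma Smap_add_left (f g : a ⊗[k] a) : Smap k a (f + g) = Smap k a f + Smap k a g := by
  unfold Smap
  rw [map_add, d13_add]

lemma Smap_neg_left (f : a ⊗[k] a) : Smap k a (-f) = -(Smap k a f) := by
  unfold Smap
  rw [map_neg, d13_neg]

lemma Smap_smul_left (c : k) (f : a ⊗[k] a) : Smap k a (c • f) = c • Smap k a f := by
  unfold Smap
  rw [map_smul, d13_smul]

lemma Smap_tmul_tmul (p q y z : a) :
    Smap k a (p ⊗ₜ[k] q) (y ⊗ₜ[k] z) =
      ⁅y,p⁆ ⊗ₜ[k] (q ⊗ₜ[k] z) + p ⊗ₜ[k] (⁅y,q⁆ ⊗ₜ[k] z) := by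
  simp [Smap_tmul, act_tmul, add_tmul]

lemma C13_23_tmul (p q u v : a) :
    C13_23 k a ((p ⊗ₜ[k] q) ⊗ₜ[k] (u ⊗ₜ[k] v)) = p ⊗ₜ[k] (u ⊗ₜ[k] ⁅q,v⁆) := by
  simp [C13_23, brL, br2]

lemma act3_assoc (x : a) (p : a ⊗[k] a) (v : a) :
    act3 k a x (TensorProduct.assoc k a a a (p ⊗ₜ[k] v)) =
      TensorProduct.assoc k a a a ((act k a x p) ⊗ₜ[k] v)
        + TensorProduct.assoc k a a a (p ⊗ₜ[k] ⁅x,v⁆) := by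
  induction p using TensorProduct.induction_on with
  | zero => simp
  | tmul p1 p2 =>
      simp [act3_tmul, act_tmul, add_tmul]
      try abel
  | add w1 w2 h1 h2 =>
      simp only [add_tmul, map_add] at *
      rw [h1, h2]; abel

lemma co_lemma (d : a →ₗ[k] a ⊗[k] a) (hd : IsCocycle k a d) (x : a) (w : a ⊗[k] a) :
    d13 k a d (act k a x w) = act3 k a x (d13 k a d w) - Smap k a (d x) w := by
  induction w using TensorProduct.induction_on with
  | zero => simp
  | tmul u v =>
      rw [act_tmul, map_add, d13_tmul, d13_tmul, d13_tmul, hd x u, Smap_tmul, act3_assoc,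
        sub_tmul, map_sub]
      abel
  | add w1 w2 h1 h2 =>
      simp only [map_add, h1, h2]
      abel

/-- Bilinear form of the residual identity used for the cross terms. -/
noncomputable def Umap : (a ⊗[k] a) →ₗ[k] (a ⊗[k] a) →ₗ[k] a ⊗[k] (a ⊗[k] a) :=
  LinearMap.mk₂ k
    (fun f w =>
      cycL k a (Smap k a w f - Smap k a f w)
        - cycL k a (Smap k a w (TensorProduct.comm k a a f)
            - Smap k a (TensorProduct.comm k a a f) w)
        - cycL k a (Smap k a (TensorProduct.comm k a a w) f
            - Smap k a f (TensorProduct.comm k a a w))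
        + cycL k a (Smap k a (TensorProduct.comm k a a w) (TensorProduct.comm k a a f)
            - Smap k a (TensorProduct.comm k a a f) (TensorProduct.comm k a a w)))
    (by
      intro f f' w
      simp only [map_add, Smap_add_left, LinearMap.add_apply, map_sub]
      abel)
    (by
      intro c f w
      simp only [map_smul, Smap_smul_left, LinearMap.smul_apply, map_sub, smul_sub]
      module)
    (by
      intro f w w'
      simp only [map_add, Smap_add_left, LinearMap.add_apply, map_sub]
      abel)
    (by
      intro c f w
      simp only [map_smul, Smap_smul_left, LinearMap.smul_apply, map_sub, smul_sub]
      module)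

lemma univA (f w : a ⊗[k] a) : Umap k a f w = 0 := by
  induction f using TensorProduct.induction_on with
  | zero => simp
  | add f1 f2 h1 h2 => simp only [map_add, LinearMap.add_apply, h1, h2, add_zero]
  | tmul p q =>
      induction w using TensorProduct.induction_on with
      | zero => simp
      | add w1 w2 h1 h2 => simp only [map_add, h1, h2, add_zero]
      | tmul y z =>
          simp only [Umap, LinearMap.mk₂_apply, TensorProduct.comm_tmul, map_sub,
            Smap_tmul_tmul, map_add, cycL_tmul]
          simp only [lskew y p, lskew y q, lskew z p, lskew z q]
          simp only [neg_tmul, tmul_neg, neg_neg]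
          abel

lemma lemA [CharZero k] (f w : a ⊗[k] a) (hfa : IsAntisym k a f) (hw : IsAntisym k a w) :
    cycL k a (Smap k a w f - Smap k a f w) = 0 := by
  have h := univA k a f w
  rw [Umap, LinearMap.mk₂_apply, hfa, hw] at h
  simp only [Smap_neg_left, LinearMap.neg_apply, map_neg, map_sub, map_add, neg_neg,
    sub_neg_eq_add, neg_sub] at h
  rw [map_sub]
  have h4 : (4 : k) • (cycL k a ((Smap k a w) f) - cycL k a ((Smap k a f) w)) = 0 := by
    linear_combination (norm := module) h
  exact (smul_eq_zero.mp h4).resolve_left (by norm_num : (4 : k) ≠ 0)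

/-- Bilinear form of the residual identity used for the quadratic terms. -/
noncomputable def Wmap (x : a) : (a ⊗[k] a) →ₗ[k] (a ⊗[k] a) →ₗ[k] a ⊗[k] (a ⊗[k] a) :=
  LinearMap.mk₂ k
    (fun f g =>
      (cycL k a (Smap k a f (act k a x g)) + act3 k a x (cycL k a (C13_23 k a (f ⊗ₜ[k] g))))
      + (cycL k a (Smap k a g (act k a x f)) + act3 k a x (cycL k a (C13_23 k a (g ⊗ₜ[k] f))))
      - (cycL k a (Smap k a (TensorProduct.comm k a a f) (act k a x g))
          + act3 k a x (cycL k a (C13_23 k a ((TensorProduct.comm k a a f) ⊗ₜ[k] g))))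
      - (cycL k a (Smap k a g (act k a x (TensorProduct.comm k a a f)))
          + act3 k a x (cycL k a (C13_23 k a (g ⊗ₜ[k] (TensorProduct.comm k a a f)))))
      - (cycL k a (Smap k a f (act k a x (TensorProduct.comm k a a g)))
          + act3 k a x (cycL k a (C13_23 k a (f ⊗ₜ[k] (TensorProduct.comm k a a g)))))
      - (cycL k a (Smap k a (TensorProduct.comm k a a g) (act k a x f))
          + act3 k a x (cycL k a (C13_23 k a ((TensorProduct.comm k a a g) ⊗ₜ[k] f))))
      + (cycL k a (Smap k a (TensorProduct.comm k a a f)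
            (act k a x (TensorProduct.comm k a a g)))
          + act3 k a x (cycL k a (C13_23 k a
            ((TensorProduct.comm k a a f) ⊗ₜ[k] (TensorProduct.comm k a a g)))))
      + (cycL k a (Smap k a (TensorProduct.comm k a a g)
            (act k a x (TensorProduct.comm k a a f)))
          + act3 k a x (cycL k a (C13_23 k a
            ((TensorProduct.comm k a a g) ⊗ₜ[k] (TensorProduct.comm k a a f))))))
    (by
      intro f f' g
      simp only [map_add, Smap_add_left, LinearMap.add_apply, add_tmul, tmul_add]
      abel)
    (by
      intro c f g
      simp only [map_smul, Smap_smul_left, LinearMap.smul_apply, ← smul_tmul', tmul_smul]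
      module)
    (by
      intro f g g'
      simp only [map_add, Smap_add_left, LinearMap.add_apply, add_tmul, tmul_add]
      abel)
    (by
      intro c f g
      simp only [map_smul, Smap_smul_left, LinearMap.smul_apply, ← smul_tmul', tmul_smul]
      module)

lemma univB (x : a) (f g : a ⊗[k] a) : Wmap k a x f g = 0 := by
  induction f using TensorProduct.induction_on with
  | zero => simp
  | add f1 f2 h1 h2 => simp only [map_add, LinearMap.add_apply, h1, h2, add_zero]
  | tmul p q =>
      induction g using TensorProduct.induction_on with
      | zero => simp
      | add g1 g2 h1 h2 => simp only [map_add, h1, h2, add_zero]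
      | tmul u v =>
          simp only [Wmap, LinearMap.mk₂_apply, TensorProduct.comm_tmul, act_tmul, map_add,
            Smap_tmul_tmul, C13_23_tmul, cycL_tmul, act3_tmul]
          simp only [lem_xin x q v, lem_xin x v q, lem_xin x p v, lem_xin x v p,
            lem_xin x q u, lem_xin x u q, lem_xin x p u, lem_xin x u p,
            lleft x u p, lleft x u q, lleft x v p, lleft x v q,
            lleft x p u, lleft x p v, lleft x q u, lleft x q v]
          simp only [lskew u p, lskew u q, lskew v p, lskew v q]
          simp only [neg_tmul, tmul_neg, sub_tmul, tmul_sub, neg_neg]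
          abel

lemma lemB [CharZero k] (x : a) (f : a ⊗[k] a) (hfa : IsAntisym k a f) :
    cycL k a (Smap k a f (act k a x f))
      = -(act3 k a x (cycL k a (C13_23 k a (f ⊗ₜ[k] f)))) := by
  have h := univB k a x f f
  rw [Wmap, LinearMap.mk₂_apply, hfa] at h
  simp only [Smap_neg_left, LinearMap.neg_apply, map_neg, neg_tmul, tmul_neg, neg_neg,
    sub_neg_eq_add, neg_sub, map_sub, map_add] at h
  have h8 : (8 : k) • (cycL k a (Smap k a f (act k a x f))
      + act3 k a x (cycL k a (C13_23 k a (f ⊗ₜ[k] f)))) = 0 := by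
    linear_combination (norm := module) h
  have hE0 := (smul_eq_zero.mp h8).resolve_left (by norm_num : (8 : k) ≠ 0)
  linear_combination (norm := module) hE0

end Aux

/-- twisting a Lie bialgebra by a classical twist gives a Lie bialgebra. -/
theorem twist_of_lie_bialgebra_is_lie_bialgebra
    (k : Type) [Field k] [CharZero k] (a : Type) [LieRing a] [LieAlgebra k a]
    (d : a →ₗ[k] a ⊗[k] a) (hd : IsLieCobracket k a d)
    (f : a ⊗[k] a) (hfa : IsAntisym k a f) (hf : IsTwist k a d f) :
    IsLieCobracket k a (twistCobr k a d f) := by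
  obtain ⟨ha, hc, hj⟩ := hd
  refine ⟨?_, ?_, ?_⟩
  · -- antisymmetry
    intro x
    show TensorProduct.comm k a a (twistCobr k a d f x) = -(twistCobr k a d f x)
    have e1 : twistCobr k a d f x = d x - act k a x f := by
      simp [twistCobr, adL, sub_eq_add_neg]
    rw [e1, map_sub, comm_act, ha x, hfa, map_neg]
    abel
  · -- cocycle
    intro x y
    have e1 : ∀ z : a, twistCobr k a d f z = d z - act k a z f := by
      intro z; simp [twistCobr, adL, sub_eq_add_neg]
    rw [e1, e1, e1, hc x y, act_lie k a x y f]
    simp only [map_sub]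
    abel
  · -- co-Jacobi
    intro x
    show cycSum k a (d13 k a (twistCobr k a d f) (twistCobr k a d f x)) = 0
    rw [cycSum_eq]
    have e2 : d13 k a (twistCobr k a d f) = d13 k a d - Smap k a f := by
      rw [twistCobr, d13_add, show adL k a f = -((act k a).flip f) from rfl, d13_neg]
      unfold Smap
      abel
    have e1 : twistCobr k a d f x = d x - act k a x f := by
      simp [twistCobr, adL, sub_eq_add_neg]
    rw [e2, e1]
    have hJ : cycL k a (d13 k a d (d x)) = 0 := by
      have := hj x
      rwa [cycSum_eq] at this
    have hCO := co_lemma k a d hc x f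
    have hA := lemA k a f (d x) hfa (ha x)
    simp only [map_sub] at hA
    have hB := lemB k a x f hfa
    have hT : cycSum k a (d13 k a d f + C13_23 k a (f ⊗ₜ[k] f)) = 0 := hf
    rw [cycSum_eq, map_add] at hT
    have hT2 := congrArg (act3 k a x) hT
    simp only [map_add, map_zero] at hT2
    simp only [LinearMap.sub_apply, map_sub]
    rw [hCO]
    simp only [map_sub, cycL_act3]
    linear_combination (norm := module) hJ + hA + hB - hT2
end

section
/- Let (𝔞, r) be a quasitriangular Lie bialgebra and θ ∈ Aut(𝔞) preserving t = r + r^{21}. Then f := (θ⊗θ)(r) − r is a classical twist of (𝔞, δ_r), i.e., (δ_r ⊗ id)(f) + [f^{13}, f^{23}] + cyclic permutations = 0, where δ_r(x) = [r, x⊗1 + 1⊗x]. -/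
open TensorProduct

variable (k : Type) [Field k] (a : Type) [LieRing a] [LieAlgebra k a]

/-- The classical Yang-Baxter equation for `r`. -/
def IsCYB (k : Type) [Field k] (a : Type) [LieRing a] [LieAlgebra k a] (r : a ⊗[k] a) : Prop :=
  C12_13 k a (r ⊗ₜ r) + C12_23 k a (r ⊗ₜ r) + C13_23 k a (r ⊗ₜ r) = 0

/-- `a`-invariance of `t = r + r^{21}`: `[t, x ⊗ 1 + 1 ⊗ x] = 0` for all `x`. -/
def IsAdInvariant (k : Type) [Field k] (a : Type) [LieRing a] [LieAlgebra k a] (t : a ⊗[k] a) : Prop :=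
  ∀ x : a, act k a x t = 0


section AuxLemmas

lemma comm_comm_apply (x : a ⊗[k] a) :
    TensorProduct.comm k a a (TensorProduct.comm k a a x) = x := by
  induction x using TensorProduct.induction_on with
  | zero => simp
  | tmul u v => simp
  | add u v hu hv => simp [map_add, hu, hv]

lemma comm_map_map (g : a →ₗ[k] a) (x : a ⊗[k] a) :
    TensorProduct.comm k a a (TensorProduct.map g g x)
      = TensorProduct.map g g (TensorProduct.comm k a a x) := by
  induction x using TensorProduct.induction_on with
  | zero => simp
  | tmul u v => simp
  | add u v hu hv => simp [map_add, hu, hv]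

lemma cyc_C12_13 (x y : a ⊗[k] a) :
    cyc k a (C12_13 k a (x ⊗ₜ y))
      = C13_23 k a ((TensorProduct.comm k a a x) ⊗ₜ (TensorProduct.comm k a a y)) := by
  have h : (cyc k a) ∘ₗ C12_13 k a =
      (C13_23 k a) ∘ₗ TensorProduct.map (TensorProduct.comm k a a).toLinearMap
        (TensorProduct.comm k a a).toLinearMap := by
    ext x1 x2 y1 y2
    simp [cyc, C12_13, C13_23, brL, br2]
  simpa using LinearMap.congr_fun h (x ⊗ₜ y)

lemma cyc_C12_23 (x y : a ⊗[k] a) :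
    cyc k a (C12_23 k a (x ⊗ₜ y))
      = -(C12_13 k a (y ⊗ₜ (TensorProduct.comm k a a x))) := by
  have h : (cyc k a) ∘ₗ C12_23 k a =
      -((C12_13 k a) ∘ₗ (TensorProduct.comm k (a ⊗[k] a) (a ⊗[k] a)).toLinearMap ∘ₗ
        TensorProduct.map (TensorProduct.comm k a a).toLinearMap LinearMap.id) := by
    ext x1 x2 y1 y2
    simp [cyc, C12_23, C12_13, brL, br2]
    rw [← lie_skew x2 y1, neg_tmul]
  simpa using LinearMap.congr_fun h (x ⊗ₜ y)

lemma cyc_C13_23 (x y : a ⊗[k] a) :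
    cyc k a (C13_23 k a (x ⊗ₜ y))
      = -(C12_23 k a (y ⊗ₜ (TensorProduct.comm k a a x))) := by
  have h : (cyc k a) ∘ₗ C13_23 k a =
      -((C12_23 k a) ∘ₗ (TensorProduct.comm k (a ⊗[k] a) (a ⊗[k] a)).toLinearMap ∘ₗ
        TensorProduct.map (TensorProduct.comm k a a).toLinearMap LinearMap.id) := by
    ext x1 x2 y1 y2
    simp [cyc, C12_23, C13_23, brL, br2]
    rw [← lie_skew x2 y2, neg_tmul, tmul_neg]
  simpa using LinearMap.congr_fun h (x ⊗ₜ y)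

lemma C12_13_map (g : a →ₗ[k] a) (hg : ∀ u v : a, g ⁅u, v⁆ = ⁅g u, g v⁆) (x y : a ⊗[k] a) :
    C12_13 k a ((TensorProduct.map g g x) ⊗ₜ (TensorProduct.map g g y))
      = TensorProduct.map g (TensorProduct.map g g) (C12_13 k a (x ⊗ₜ y)) := by
  have h : (C12_13 k a) ∘ₗ TensorProduct.map (TensorProduct.map g g) (TensorProduct.map g g)
      = (TensorProduct.map g (TensorProduct.map g g)) ∘ₗ C12_13 k a := by
    ext x1 x2 y1 y2
    simp [C12_13, brL, br2, hg]
  simpa using LinearMap.congr_fun h (x ⊗ₜ y)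

lemma C12_23_map (g : a →ₗ[k] a) (hg : ∀ u v : a, g ⁅u, v⁆ = ⁅g u, g v⁆) (x y : a ⊗[k] a) :
    C12_23 k a ((TensorProduct.map g g x) ⊗ₜ (TensorProduct.map g g y))
      = TensorProduct.map g (TensorProduct.map g g) (C12_23 k a (x ⊗ₜ y)) := by
  have h : (C12_23 k a) ∘ₗ TensorProduct.map (TensorProduct.map g g) (TensorProduct.map g g)
      = (TensorProduct.map g (TensorProduct.map g g)) ∘ₗ C12_23 k a := by
    ext x1 x2 y1 y2
    simp [C12_23, brL, br2, hg]
  simpa using LinearMap.congr_fun h (x ⊗ₜ y)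

lemma C13_23_map (g : a →ₗ[k] a) (hg : ∀ u v : a, g ⁅u, v⁆ = ⁅g u, g v⁆) (x y : a ⊗[k] a) :
    C13_23 k a ((TensorProduct.map g g x) ⊗ₜ (TensorProduct.map g g y))
      = TensorProduct.map g (TensorProduct.map g g) (C13_23 k a (x ⊗ₜ y)) := by
  have h : (C13_23 k a) ∘ₗ TensorProduct.map (TensorProduct.map g g) (TensorProduct.map g g)
      = (TensorProduct.map g (TensorProduct.map g g)) ∘ₗ C13_23 k a := by
    ext x1 x2 y1 y2
    simp [C13_23, brL, br2, hg]
  simpa using LinearMap.congr_fun h (x ⊗ₜ y)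

lemma d13_adL (r f : a ⊗[k] a) :
    d13 k a (adL k a r) f = C12_13 k a (r ⊗ₜ f) + C12_23 k a (r ⊗ₜ f) := by
  induction f using TensorProduct.induction_on with
  | zero => simp [TensorProduct.tmul_zero]
  | tmul u v =>
      induction r using TensorProduct.induction_on with
      | zero =>
          simp [adL, d13, TensorProduct.zero_tmul]
      | tmul xx yy =>
          simp [d13, adL, act, C12_13, C12_23, brL, br2, TensorProduct.neg_tmul,
            TensorProduct.tmul_neg, TensorProduct.add_tmul, TensorProduct.tmul_add]
          rw [← lie_skew xx u, ← lie_skew yy u]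
          simp only [TensorProduct.neg_tmul, TensorProduct.tmul_neg]
          abel
      | add r1 r2 h1 h2 =>
          have hadd : adL k a (r1 + r2) = adL k a r1 + adL k a r2 := by
            simp [adL, map_add]; abel
          rw [hadd]
          have hd : d13 k a (adL k a r1 + adL k a r2)
              = d13 k a (adL k a r1) + d13 k a (adL k a r2) := by
            simp [d13, TensorProduct.map_add_left, LinearMap.comp_add]
          rw [hd]
          simp only [LinearMap.add_apply, h1, h2, TensorProduct.add_tmul, map_add]
          abel
  | add f1 f2 h1 h2 =>
      simp only [map_add, TensorProduct.tmul_add, h1, h2]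
      abel

lemma inv_pair (t : a ⊗[k] a) (ht : ∀ x : a, act k a x t = 0) (f : a ⊗[k] a) :
    C12_13 k a (f ⊗ₜ t) = C13_23 k a (t ⊗ₜ (TensorProduct.comm k a a f)) := by
  induction f using TensorProduct.induction_on with
  | zero => simp [TensorProduct.zero_tmul, TensorProduct.tmul_zero]
  | tmul u v =>
      have h1 : ∀ w : a ⊗[k] a, C12_13 k a ((u ⊗ₜ v) ⊗ₜ w) =
          (TensorProduct.map LinearMap.id ((TensorProduct.mk k a a) v))
            ((TensorProduct.map (br2 k a u) LinearMap.id) w) := by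
        intro w
        induction w using TensorProduct.induction_on with
        | zero => simp [TensorProduct.tmul_zero]
        | tmul p q => simp [C12_13, brL, br2, TensorProduct.mk]
        | add p q hp hq => simp [TensorProduct.tmul_add, map_add, hp, hq]
      have h2 : ∀ w : a ⊗[k] a, C13_23 k a (w ⊗ₜ (v ⊗ₜ u)) =
          -((TensorProduct.map LinearMap.id ((TensorProduct.mk k a a) v))
            ((TensorProduct.map LinearMap.id (br2 k a u)) w)) := by
        intro w
        induction w using TensorProduct.induction_on with
        | zero => simp [TensorProduct.zero_tmul]
        | tmul p q =>
            simp [C13_23, brL, br2, TensorProduct.mk]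
            rw [← lie_skew q u, TensorProduct.tmul_neg, TensorProduct.tmul_neg]
        | add p q hp hq => simp [TensorProduct.add_tmul, map_add, hp, hq]; abel
      have hu := ht u
      have hsum : (TensorProduct.map (br2 k a u) LinearMap.id) t
          = -((TensorProduct.map LinearMap.id (br2 k a u)) t) := by
        have : (TensorProduct.map (br2 k a u) LinearMap.id) t
            + (TensorProduct.map LinearMap.id (br2 k a u)) t = 0 := by
          simpa [act] using hu
        exact eq_neg_of_add_eq_zero_left this
      rw [h1, hsum, map_neg, TensorProduct.comm_tmul, h2]
  | add f1 f2 hf1 hf2 =>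
      simp only [TensorProduct.add_tmul, TensorProduct.tmul_add, map_add, hf1, hf2]

end AuxLemmas

/-- `f = (θ⊗θ)(r) − r` is a classical twist of the quasitriangular
Lie bialgebra `(a, δ_r)` where `δ_r(x) = [r, x⊗1+1⊗x]`. -/
theorem qt_twist_is_classical_twist
    (k : Type) [Field k] [CharZero k] (a : Type) [LieRing a] [LieAlgebra k a]
    (r : a ⊗[k] a) (hr : IsCYB k a r)
    (ht : IsAdInvariant k a (r + TensorProduct.comm k a a r))
    (θ : a ≃ₗ⁅k⁆ a)
    (hθt : TensorProduct.map θ.toLieHom.toLinearMap θ.toLieHom.toLinearMap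
        (r + TensorProduct.comm k a a r) = r + TensorProduct.comm k a a r) :
    IsTwist k a (adL k a r)
      (TensorProduct.map θ.toLieHom.toLinearMap θ.toLieHom.toLinearMap r - r) := by
  have hg : ∀ u v : a, θ.toLieHom.toLinearMap ⁅u, v⁆
      = ⁅θ.toLieHom.toLinearMap u, θ.toLieHom.toLinearMap v⁆ := by
    intro u v; simp
  set g := θ.toLieHom.toLinearMap with hgdef
  set s := TensorProduct.map g g r with hsdef
  set f := s - r with hfdef
  have hcs : TensorProduct.comm k a a s = r + TensorProduct.comm k a a r - s := by
    have h1 : TensorProduct.comm k a a s = TensorProduct.map g g (TensorProduct.comm k a a r) := by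
      rw [hsdef, comm_map_map]
    have h2 := hθt
    rw [map_add] at h2
    rw [h1]
    exact eq_sub_of_add_eq' h2
  have hcf : TensorProduct.comm k a a f = -f := by
    rw [hfdef, map_sub, hcs]; abel
  have hrr : C12_13 k a (r ⊗ₜ r) + C12_23 k a (r ⊗ₜ r) + C13_23 k a (r ⊗ₜ r) = 0 := hr
  have hss : C12_13 k a (s ⊗ₜ s) + C12_23 k a (s ⊗ₜ s) + C13_23 k a (s ⊗ₜ s) = 0 := by
    rw [hsdef, C12_13_map k a g hg, C12_23_map k a g hg, C13_23_map k a g hg,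
      ← map_add, ← map_add, hrr, map_zero]
  have hinv : C12_13 k a (f ⊗ₜ (r + TensorProduct.comm k a a r))
      + C13_23 k a ((r + TensorProduct.comm k a a r) ⊗ₜ f) = 0 := by
    rw [inv_pair k a _ ht f, hcf]
    simp [TensorProduct.tmul_neg]
  unfold IsTwist cycSum
  rw [d13_adL]
  simp only [map_add, cyc_C12_13, cyc_C12_23, cyc_C13_23, hcf, comm_comm_apply,
    TensorProduct.neg_tmul, TensorProduct.tmul_neg, map_neg, neg_neg]
  rw [show (0 : a ⊗[k] (a ⊗[k] a))
      = (C12_13 k a (s ⊗ₜ s) + C12_23 k a (s ⊗ₜ s) + C13_23 k a (s ⊗ₜ s))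
        - (C12_13 k a (r ⊗ₜ r) + C12_23 k a (r ⊗ₜ r) + C13_23 k a (r ⊗ₜ r))
        - (C12_13 k a (f ⊗ₜ (r + TensorProduct.comm k a a r))
            + C13_23 k a ((r + TensorProduct.comm k a a r) ⊗ₜ f))
    from by rw [hss, hrr, hinv]; simp]
  rw [hfdef]
  simp only [TensorProduct.sub_tmul, TensorProduct.tmul_sub, TensorProduct.add_tmul,
    TensorProduct.tmul_add, map_add, map_sub]
  abel
end
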